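/- arXiv:1405.4270 — 3 statements merged into one kernel-verified Lean document; each statement's English description precedes it below -/
import Mathlib

section
/- Fix a real α with 0 < α ≤ 1, and let λ₁,…,λₙ > 0 and θ₁,…,θₙ > 0 be positive reals such that (λ₁,…,λₙ) is majorized by (θ₁,…,θₙ). Then for every t > 0 the reverse hazard rates of the parallel systems satisfy r_{n:n}^λ(t) ≤ r_{n:n}^θ(t), where r_{n:n}^λ(t) = Σ_{i=1}^n α λᵢ^α t^{α−1} / (e^{(λᵢ t)^α} − 1); i.e., the parallel system with scale parameters λ is smaller in the reverse hazard rate order than the one with scale parameters θ. -/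
open Real Set

/-- `x` is weakly majorized (from below) by `y`: for every `j`, the sum of the `j`
smallest components of `x` is at least the sum of the `j` smallest components of `y`.
Equivalently: for every subset `s` of indices there is a subset `u` of the same
cardinality with `∑_{i ∈ u} y i ≤ ∑_{i ∈ s} x i`. -/
def WeaklyMajorizedBy {n : ℕ} (x y : Fin n → ℝ) : Prop :=
  ∀ s : Finset (Fin n), ∃ u : Finset (Fin n),
    u.card = s.card ∧ ∑ i ∈ u, y i ≤ ∑ i ∈ s, x i

/-- `x` is majorized by `y`: the partial sums of the `j` smallest components of `x`
dominate those of `y`, and the total sums agree. -/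
def MajorizedBy {n : ℕ} (x y : Fin n → ℝ) : Prop :=
  WeaklyMajorizedBy x y ∧ ∑ i, x i = ∑ i, y i


lemma convexOn_congr' {S : Set ℝ} {f g : ℝ → ℝ} (h : ConvexOn ℝ S f)
    (he : ∀ x ∈ S, f x = g x) : ConvexOn ℝ S g := by
  refine ⟨h.1, fun x hx y hy a b ha hb hab => ?_⟩
  rw [← he _ (h.1 hx hy ha hb hab), ← he _ hx, ← he _ hy]
  exact h.2 hx hy ha hb hab

lemma concaveOn_congr' {S : Set ℝ} {f g : ℝ → ℝ} (h : ConcaveOn ℝ S f)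
    (he : ∀ x ∈ S, f x = g x) : ConcaveOn ℝ S g := by
  refine ⟨h.1, fun x hx y hy a b ha hb hab => ?_⟩
  rw [← he _ (h.1 hx hy ha hb hab), ← he _ hx, ← he _ hy]
  exact h.2 hx hy ha hb hab

lemma convexOn_comp_concave {S T : Set ℝ} {f g : ℝ → ℝ} (hT : Convex ℝ T)
    (hg : ConvexOn ℝ T g) (hg' : AntitoneOn g T) (hf : ConcaveOn ℝ S f)
    (hmap : Set.MapsTo f S T) : ConvexOn ℝ S (fun x => g (f x)) := by
  refine ⟨hf.1, fun x hx y hy a b ha hb hab => ?_⟩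
  have hmem : a • x + b • y ∈ S := hf.1 hx hy ha hb hab
  have h1 : a • f x + b • f y ≤ f (a • x + b • y) := hf.2 hx hy ha hb hab
  have hT1 : f (a • x + b • y) ∈ T := hmap hmem
  have hT2 : a • f x + b • f y ∈ T := hT (hmap hx) (hmap hy) ha hb hab
  calc g (f (a • x + b • y)) ≤ g (a • f x + b • f y) := hg' hT2 hT1 h1
    _ ≤ a • g (f x) + b • g (f y) := hg.2 (hmap hx) (hmap hy) ha hb hab

lemma exp_sub_one_pos {u : ℝ} (hu : 0 < u) : 0 < exp u - 1 := by
  have h : (1:ℝ) < exp u := by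
    rw [← Real.exp_zero]; exact Real.exp_lt_exp.mpr hu
  linarith

lemma hfun_antitone : AntitoneOn (fun u : ℝ => u / (exp u - 1)) (Ioi 0) := by
  intro u hu v hv huv
  rcases eq_or_lt_of_le huv with rfl | huv
  · exact le_refl _
  have hu0 : (0:ℝ) < u := hu
  have hv0 : (0:ℝ) < v := hv
  have h1 : (exp u - exp 0) / (u - 0) ≤ (exp v - exp 0) / (v - 0) :=
    convexOn_exp.secant_mono (mem_univ _) (mem_univ _) (mem_univ _)
      (ne_of_gt hu0) (ne_of_gt hv0) huv.le
  rw [Real.exp_zero, sub_zero, sub_zero] at h1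
  show v / (exp v - 1) ≤ u / (exp u - 1)
  rw [div_le_div_iff₀ (exp_sub_one_pos hv0) (exp_sub_one_pos hu0)]
  rw [div_le_div_iff₀ hu0 hv0] at h1
  nlinarith

lemma psi_deriv_nonneg {u : ℝ} (hu : 0 ≤ u) : 0 ≤ u * exp u + 1 - exp u := by
  have h1 : 1 - u ≤ exp (-u) := by linarith [Real.add_one_le_exp (-u)]
  have h2 : exp (-u) * exp u = 1 := by rw [← Real.exp_add]; simp
  nlinarith [mul_le_mul_of_nonneg_right h1 (Real.exp_pos u).le]

lemma psi_nonneg {u : ℝ} (hu : 0 ≤ u) : 0 ≤ u * exp u + u - 2 * exp u + 2 := by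
  have hder : ∀ x : ℝ, HasDerivAt (fun y : ℝ => y * exp y + y - 2 * exp y + 2)
      (x * exp x + 1 - exp x) x := by
    intro x
    have h1 : HasDerivAt (fun y : ℝ => y * exp y) (1 * exp x + x * exp x) x :=
      (hasDerivAt_id x).mul (Real.hasDerivAt_exp x)
    have h2 : HasDerivAt (fun y : ℝ => y * exp y + y) (1 * exp x + x * exp x + 1) x :=
      h1.add (hasDerivAt_id x)
    have h3 : HasDerivAt (fun y : ℝ => 2 * exp y) (2 * exp x) x :=
      (Real.hasDerivAt_exp x).const_mul 2
    have h4 := (h2.sub h3).add_const 2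
    refine h4.congr_deriv ?_
    ring
  have hmono : MonotoneOn (fun y : ℝ => y * exp y + y - 2 * exp y + 2) (Ici 0) := by
    apply monotoneOn_of_deriv_nonneg (convex_Ici 0)
    · exact fun x _ => (hder x).continuousAt.continuousWithinAt
    · exact fun x _ => (hder x).differentiableAt.differentiableWithinAt
    · intro x hx
      rw [interior_Ici] at hx
      rw [(hder x).deriv]
      exact psi_deriv_nonneg (le_of_lt hx)
  have h0 := hmono self_mem_Ici (mem_Ici.mpr hu) hu
  simp only [Real.exp_zero] at h0
  linarith

lemma hfun_convex : ConvexOn ℝ (Ioi 0) (fun u : ℝ => u / (exp u - 1)) := by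
  have hD1 : ∀ u : ℝ, 0 < u → HasDerivAt (fun u : ℝ => u / (exp u - 1))
      ((exp u - 1 - u * exp u) / (exp u - 1) ^ 2) u := by
    intro u hu
    have hne := (exp_sub_one_pos hu).ne'
    have h1 : HasDerivAt (fun y : ℝ => exp y - 1) (exp u) u := (Real.hasDerivAt_exp u).sub_const 1
    have h2 := (hasDerivAt_id u).div h1 hne
    refine h2.congr_deriv ?_
    simp only [id_eq]
    ring
  have hD2 : ∀ u : ℝ, 0 < u → HasDerivAt (fun u : ℝ => (exp u - 1 - u * exp u) / (exp u - 1) ^ 2)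
      (((-(u * exp u)) * (exp u - 1) ^ 2 -
        (exp u - 1 - u * exp u) * (2 * (exp u - 1) ^ 1 * exp u)) / ((exp u - 1) ^ 2) ^ 2) u := by
    intro u hu
    have hne : (exp u - 1) ^ 2 ≠ 0 := pow_ne_zero _ (exp_sub_one_pos hu).ne'
    have hN : HasDerivAt (fun y : ℝ => exp y - 1 - y * exp y) (-(u * exp u)) u := by
      have h := ((Real.hasDerivAt_exp u).sub_const 1).sub
        ((hasDerivAt_id u).mul (Real.hasDerivAt_exp u))
      refine h.congr_deriv ?_
      simp only [id_eq]
      ring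
    have hDen : HasDerivAt (fun y : ℝ => (exp y - 1) ^ 2) (2 * (exp u - 1) ^ 1 * exp u) u :=
      ((Real.hasDerivAt_exp u).sub_const 1).pow 2
    exact hN.div hDen hne
  apply convexOn_of_deriv2_nonneg (convex_Ioi 0)
  · intro u hu
    exact (hD1 u hu).continuousAt.continuousWithinAt
  · rw [interior_Ioi]
    exact fun u hu => (hD1 u hu).differentiableAt.differentiableWithinAt
  · rw [interior_Ioi]
    intro u hu
    have heq : (fun v : ℝ => (exp v - 1 - v * exp v) / (exp v - 1) ^ 2)
        =ᶠ[nhds u] deriv (fun u : ℝ => u / (exp u - 1)) := by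
      filter_upwards [Ioi_mem_nhds hu] with v hv
      exact ((hD1 v hv).deriv).symm
    exact (heq.differentiableAt_iff.mp (hD2 u hu).differentiableAt).differentiableWithinAt
  · rw [interior_Ioi]
    intro u hu
    have heq : deriv (fun u : ℝ => u / (exp u - 1))
        =ᶠ[nhds u] (fun v : ℝ => (exp v - 1 - v * exp v) / (exp v - 1) ^ 2) := by
      filter_upwards [Ioi_mem_nhds hu] with v hv
      exact (hD1 v hv).deriv
    have h2 : deriv^[2] (fun u : ℝ => u / (exp u - 1)) u
        = deriv (fun v : ℝ => (exp v - 1 - v * exp v) / (exp v - 1) ^ 2) u := by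
      simp only [Function.iterate_succ, Function.iterate_zero, Function.comp_apply, id_eq]
      exact heq.deriv_eq
    rw [h2, (hD2 u hu).deriv]
    have hnum : (-(u * exp u)) * (exp u - 1) ^ 2 -
        (exp u - 1 - u * exp u) * (2 * (exp u - 1) ^ 1 * exp u)
        = (exp u - 1) * exp u * (u * exp u + u - 2 * exp u + 2) := by ring
    rw [hnum]
    apply div_nonneg
    · exact mul_nonneg (mul_nonneg (exp_sub_one_pos hu).le (Real.exp_pos u).le)
        (psi_nonneg hu.le)
    · positivity

noncomputable def rsl (φ : ℝ → ℝ) (a : ℝ) : ℝ :=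
  sInf ((fun z => (φ z - φ a) / (z - a)) '' Ioi a)

lemma rsl_nonempty (φ : ℝ → ℝ) (a : ℝ) :
    ((fun z => (φ z - φ a) / (z - a)) '' Ioi a).Nonempty :=
  Set.Nonempty.image _ ⟨a + 1, mem_Ioi.mpr (lt_add_one a)⟩

lemma rsl_bddBelow {φ : ℝ → ℝ} (hφ : ConvexOn ℝ (Ioi 0) φ) {a : ℝ} (ha : 0 < a) :
    BddBelow ((fun z => (φ z - φ a) / (z - a)) '' Ioi a) := by
  refine ⟨(φ (a / 2) - φ a) / (a / 2 - a), ?_⟩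
  rintro s ⟨z, hz, rfl⟩
  exact hφ.secant_mono (mem_Ioi.mpr ha) (mem_Ioi.mpr (by linarith))
    (mem_Ioi.mpr (lt_trans ha hz)) (by intro h; linarith [congrArg id h])
    (ne_of_gt (mem_Ioi.mp hz)) (by linarith [mem_Ioi.mp hz])

lemma rsl_le {φ : ℝ → ℝ} (hφ : ConvexOn ℝ (Ioi 0) φ) {a z : ℝ} (ha : 0 < a) (hz : a < z) :
    rsl φ a ≤ (φ z - φ a) / (z - a) :=
  csInf_le (rsl_bddBelow hφ ha) ⟨z, hz, rfl⟩

lemma rsl_support {φ : ℝ → ℝ} (hφ : ConvexOn ℝ (Ioi 0) φ) {a y : ℝ} (ha : 0 < a) (hy : 0 < y) :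
    φ a + rsl φ a * (y - a) ≤ φ y := by
  rcases lt_trichotomy y a with hlt | rfl | hgt
  · have hle : (φ y - φ a) / (y - a) ≤ rsl φ a := by
      apply le_csInf (rsl_nonempty φ a)
      rintro s ⟨z, hz, rfl⟩
      exact hφ.secant_mono (mem_Ioi.mpr ha) (mem_Ioi.mpr hy)
        (mem_Ioi.mpr (lt_trans ha (mem_Ioi.mp hz))) (ne_of_lt hlt)
        (ne_of_gt (mem_Ioi.mp hz)) (le_of_lt (lt_trans hlt (mem_Ioi.mp hz)))
    have h2 : rsl φ a * (y - a) ≤ ((φ y - φ a) / (y - a)) * (y - a) :=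
      mul_le_mul_of_nonpos_right hle (by linarith)
    rw [div_mul_cancel₀ _ (sub_ne_zero.mpr (ne_of_lt hlt))] at h2
    linarith
  · simp
  · have h1 := rsl_le hφ ha hgt
    have h2 := mul_le_mul_of_nonneg_right h1 (by linarith : (0:ℝ) ≤ y - a)
    rw [div_mul_cancel₀ _ (sub_ne_zero.mpr (ne_of_gt hgt))] at h2
    linarith

lemma rsl_mono {φ : ℝ → ℝ} (hφ : ConvexOn ℝ (Ioi 0) φ) {a b : ℝ} (ha : 0 < a) (hb : 0 < b)
    (hab : a ≤ b) : rsl φ a ≤ rsl φ b := by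
  rcases eq_or_lt_of_le hab with rfl | hab
  · exact le_refl _
  apply le_csInf (rsl_nonempty φ b)
  rintro s ⟨z, hz, rfl⟩
  have hz' : b < z := mem_Ioi.mp hz
  calc rsl φ a ≤ (φ z - φ a) / (z - a) := rsl_le hφ ha (lt_trans hab hz')
    _ ≤ (φ z - φ b) / (z - b) :=
      hφ.secant_mono_aux3 (mem_Ioi.mpr ha) (mem_Ioi.mpr (lt_trans (lt_trans ha hab) hz'))
        hab hz'

lemma filter_lt_succ {n k : ℕ} (hk : k < n) :
    (Finset.univ.filter (fun i : Fin n => (i : ℕ) < k + 1)) =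
      insert (⟨k, hk⟩ : Fin n) (Finset.univ.filter (fun i : Fin n => (i : ℕ) < k)) := by
  ext i
  simp only [Finset.mem_filter, Finset.mem_insert, Finset.mem_univ, true_and, Fin.ext_iff]
  omega

lemma filter_lt_top {n : ℕ} :
    (Finset.univ.filter (fun i : Fin n => (i : ℕ) < n)) = Finset.univ := by
  apply Finset.filter_true_of_mem
  exact fun i _ => i.is_lt

lemma card_filter_lt {n : ℕ} : ∀ k, k ≤ n →
    (Finset.univ.filter (fun i : Fin n => (i : ℕ) < k)).card = k := by
  intro k
  induction k with
  | zero => intro _; simp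
  | succ m ih =>
    intro hk
    have hm : m < n := Nat.lt_of_succ_le hk
    rw [filter_lt_succ hm, Finset.card_insert_of_notMem (by simp), ih (le_of_lt hm)]

def pad {n : ℕ} (w : Fin n → ℝ) : ℕ → ℝ := fun j => if h : j < n then w ⟨j, h⟩ else 0

lemma sum_filter_eq_sum_range {n : ℕ} (w : Fin n → ℝ) : ∀ k, k ≤ n →
    ∑ i ∈ Finset.univ.filter (fun i : Fin n => (i : ℕ) < k), w i =
      ∑ j ∈ Finset.range k, pad w j := by
  intro k
  induction k with
  | zero => intro _; simp
  | succ m ih =>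
    intro hk
    have hm : m < n := Nat.lt_of_succ_le hk
    rw [filter_lt_succ hm, Finset.sum_insert (by simp), Finset.sum_range_succ, ih (le_of_lt hm)]
    rw [show pad w m = w ⟨m, hm⟩ from dif_pos hm]
    ring

lemma prefix_sum_le {n : ℕ} (y : Fin n → ℝ) (hy : Monotone y) (v : Finset (Fin n)) :
    ∑ i ∈ Finset.univ.filter (fun i : Fin n => (i : ℕ) < v.card), y i ≤ ∑ i ∈ v, y i := by
  induction v using Finset.strongInduction with
  | _ v ih =>
    rcases v.eq_empty_or_nonempty with rfl | hv
    · simp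
    · have hmv : v.max' hv ∈ v := v.max'_mem hv
      set m := v.max' hv with hm
      set v' := v.erase m with hv'
      have hss : v' ⊂ v := Finset.erase_ssubset hmv
      have hcard : v'.card + 1 = v.card := by
        rw [hv', Finset.card_erase_of_mem hmv]
        have : 0 < v.card := Finset.card_pos.mpr hv
        omega
      have hkm : v'.card ≤ (m : ℕ) := by
        have hsub : v ⊆ Finset.Iic m := fun i hi => Finset.mem_Iic.mpr (v.le_max' i hi)
        have hcc := Finset.card_le_card hsub
        rw [Fin.card_Iic] at hcc
        omega
      have hkn : v'.card < n := lt_of_le_of_lt hkm m.is_lt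
      rw [← hcard, filter_lt_succ hkn, Finset.sum_insert (by simp),
        ← Finset.add_sum_erase v y hmv]
      have hle : y ⟨v'.card, hkn⟩ ≤ y m := hy (by simpa [Fin.le_def] using hkm)
      exact add_le_add hle (ih v' hss)

lemma abel_nonneg (n : ℕ) (c d : ℕ → ℝ) (hc : ∀ i, i + 1 < n → c i ≤ c (i + 1))
    (hP : ∀ k, k ≤ n → ∑ i ∈ Finset.range k, d i ≤ 0)
    (htot : ∑ i ∈ Finset.range n, d i = 0) :
    0 ≤ ∑ i ∈ Finset.range n, c i * d i := by
  have habel := Finset.sum_range_by_parts c d n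
  simp only [smul_eq_mul] at habel
  rw [htot, mul_zero, zero_sub] at habel
  have hterm : ∀ i ∈ Finset.range (n - 1),
      (c (i + 1) - c i) * ∑ j ∈ Finset.range (i + 1), d j ≤ 0 := by
    intro i hi
    have hi' : i < n - 1 := Finset.mem_range.mp hi
    have h1 : i + 1 < n := by omega
    exact mul_nonpos_of_nonneg_of_nonpos (by linarith [hc i h1]) (hP (i + 1) (by omega))
  have hsum : ∑ i ∈ Finset.range (n - 1),
      (c (i + 1) - c i) * ∑ j ∈ Finset.range (i + 1), d j ≤ 0 :=
    Finset.sum_nonpos hterm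
  rw [habel]
  linarith

lemma karamata_fin {n : ℕ} (φ : ℝ → ℝ) (hφ : ConvexOn ℝ (Ioi 0) φ)
    (x y : Fin n → ℝ) (hx : ∀ i, 0 < x i) (hy : ∀ i, 0 < y i)
    (hmx : Monotone x)
    (hpre : ∀ k, k ≤ n → ∑ i ∈ Finset.univ.filter (fun i : Fin n => (i : ℕ) < k), y i ≤
      ∑ i ∈ Finset.univ.filter (fun i : Fin n => (i : ℕ) < k), x i)
    (htot : ∑ i, x i = ∑ i, y i) :
    ∑ i, φ (x i) ≤ ∑ i, φ (y i) := by
  set c : Fin n → ℝ := fun i => rsl φ (x i) with hcdef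
  have key : 0 ≤ ∑ i, c i * (y i - x i) := by
    have hconv : ∑ i, c i * (y i - x i) =
        ∑ j ∈ Finset.range n, (pad c j) * (pad (fun i => y i - x i) j) := by
      rw [← filter_lt_top (n := n),
        sum_filter_eq_sum_range (fun i => c i * (y i - x i)) n le_rfl]
      refine Finset.sum_congr rfl fun j hj => ?_
      have hjn : j < n := Finset.mem_range.mp hj
      simp [pad, hjn]
    rw [hconv]
    apply abel_nonneg n (pad c) (pad fun i => y i - x i)
    · intro i hi
      have h1 : i < n := by omega
      simp only [pad, dif_pos h1, dif_pos hi]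
      apply rsl_mono hφ (hx _) (hx _)
      exact hmx (by simp [Fin.le_def])
    · intro k hk
      rw [← sum_filter_eq_sum_range (fun i => y i - x i) k hk, Finset.sum_sub_distrib]
      linarith [hpre k hk]
    · rw [← sum_filter_eq_sum_range (fun i => y i - x i) n le_rfl, filter_lt_top,
        Finset.sum_sub_distrib]
      linarith
  have hmain : ∀ i ∈ Finset.univ, φ (x i) + c i * (y i - x i) ≤ φ (y i) :=
    fun i _ => rsl_support hφ (hx i) (hy i)
  have hs := Finset.sum_le_sum hmain
  rw [Finset.sum_add_distrib] at hs
  linarith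

/-- If `(λ₁,…,λₙ) ≼^m (θ₁,…,θₙ)` and `0 < α ≤ 1`, then for every `t > 0` the reverse
hazard rate of the parallel Weibull system with scale parameters `λ` is at most that of
the system with scale parameters `θ`, i.e. `X_{n:n}^λ ≤_rh X_{n:n}^θ`. -/
theorem parallel_weibull_rh_order_majorization
    {n : ℕ} (α : ℝ) (hα : 0 < α) (hα1 : α ≤ 1)
    (lam θ : Fin n → ℝ) (hlam : ∀ i, 0 < lam i) (hθ : ∀ i, 0 < θ i)
    (hmaj : MajorizedBy lam θ) :
    ∀ t : ℝ, 0 < t →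
      ∑ i, α * lam i ^ α * t ^ (α - 1) / (exp ((lam i * t) ^ α) - 1) ≤
        ∑ i, α * θ i ^ α * t ^ (α - 1) / (exp ((θ i * t) ^ α) - 1) := by
  intro t ht
  -- the reverse hazard rate summand as a function of the scale parameter
  have hconv : ConvexOn ℝ (Ioi 0)
      (fun x : ℝ => α * x ^ α * t ^ (α - 1) / (exp ((x * t) ^ α) - 1)) := by
    have hg : ConcaveOn ℝ (Ioi 0) (fun x : ℝ => (x * t) ^ α) := by
      have h1 : ConcaveOn ℝ (Ici 0) (fun x : ℝ => x ^ α) := Real.concaveOn_rpow hα.le hα1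
      have h2 : ConcaveOn ℝ (Ioi 0) (fun x : ℝ => x ^ α) :=
        h1.subset Ioi_subset_Ici_self (convex_Ioi 0)
      have h3 : ConcaveOn ℝ (Ioi 0) (fun x : ℝ => t ^ α • x ^ α) :=
        h2.smul (le_of_lt (Real.rpow_pos_of_pos ht α))
      apply concaveOn_congr' h3
      intro x hx
      rw [smul_eq_mul, Real.mul_rpow (le_of_lt (mem_Ioi.mp hx)) ht.le]
      ring
    have hmap : MapsTo (fun x : ℝ => (x * t) ^ α) (Ioi 0) (Ioi 0) := fun x hx =>
      mem_Ioi.mpr (Real.rpow_pos_of_pos (mul_pos (mem_Ioi.mp hx) ht) α)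
    have hcomp : ConvexOn ℝ (Ioi 0)
        (fun x : ℝ => (x * t) ^ α / (exp ((x * t) ^ α) - 1)) :=
      convexOn_comp_concave (convex_Ioi 0) hfun_convex hfun_antitone hg hmap
    have hsmul : ConvexOn ℝ (Ioi 0)
        (fun x : ℝ => (α / t) • ((x * t) ^ α / (exp ((x * t) ^ α) - 1))) :=
      hcomp.smul (by positivity)
    apply convexOn_congr' hsmul
    intro x hx
    have hx0 : 0 < x := mem_Ioi.mp hx
    have hxt : (x * t) ^ α = x ^ α * t ^ α := Real.mul_rpow hx0.le ht.le
    have ht1 : t ^ (α - 1) = t ^ α / t := by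
      rw [Real.rpow_sub ht, Real.rpow_one]
    rw [smul_eq_mul, ht1, hxt]
    ring
  obtain ⟨hweak, htot⟩ := hmaj
  set σ := Tuple.sort lam with hσ
  set τ := Tuple.sort θ with hτ
  have hxm : Monotone (lam ∘ σ) := Tuple.monotone_sort lam
  have hym : Monotone (θ ∘ τ) := Tuple.monotone_sort θ
  have hpre : ∀ k, k ≤ n →
      ∑ i ∈ Finset.univ.filter (fun i : Fin n => (i : ℕ) < k), (θ ∘ τ) i ≤
        ∑ i ∈ Finset.univ.filter (fun i : Fin n => (i : ℕ) < k), (lam ∘ σ) i := by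
    intro k hk
    obtain ⟨u, hucard, husum⟩ :=
      hweak ((Finset.univ.filter (fun i : Fin n => (i : ℕ) < k)).image σ)
    have hs1 : ∑ i ∈ (Finset.univ.filter (fun i : Fin n => (i : ℕ) < k)).image σ, lam i =
        ∑ i ∈ Finset.univ.filter (fun i : Fin n => (i : ℕ) < k), lam (σ i) :=
      Finset.sum_image (fun a _ b _ h => σ.injective h)
    have hu1 : ∑ i ∈ u.image τ.symm, θ (τ i) = ∑ i ∈ u, θ i := by
      rw [Finset.sum_image (fun a _ b _ h => τ.symm.injective h)]
      exact Finset.sum_congr rfl fun i _ => by simp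
    have hucard' : (u.image τ.symm).card = k := by
      rw [Finset.card_image_of_injective _ τ.symm.injective, hucard,
        Finset.card_image_of_injective _ σ.injective, card_filter_lt k hk]
    have hmin := prefix_sum_le (θ ∘ τ) hym (u.image τ.symm)
    rw [hucard'] at hmin
    calc ∑ i ∈ Finset.univ.filter (fun i : Fin n => (i : ℕ) < k), (θ ∘ τ) i
        ≤ ∑ i ∈ u.image τ.symm, (θ ∘ τ) i := hmin
      _ = ∑ i ∈ u, θ i := hu1
      _ ≤ ∑ i ∈ (Finset.univ.filter (fun i : Fin n => (i : ℕ) < k)).image σ, lam i := husum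
      _ = ∑ i ∈ Finset.univ.filter (fun i : Fin n => (i : ℕ) < k), (lam ∘ σ) i := hs1
  have htot' : ∑ i, (lam ∘ σ) i = ∑ i, (θ ∘ τ) i := by
    rw [show ∑ i, (lam ∘ σ) i = ∑ i, lam (σ i) from rfl, Equiv.sum_comp σ lam,
      show ∑ i, (θ ∘ τ) i = ∑ i, θ (τ i) from rfl, Equiv.sum_comp τ θ, htot]
  have hkar := karamata_fin _ hconv (lam ∘ σ) (θ ∘ τ)
    (fun i => hlam _) (fun i => hθ _) hxm hpre htot'
  have hL : ∑ i, α * lam i ^ α * t ^ (α - 1) / (exp ((lam i * t) ^ α) - 1) =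
      ∑ i, (fun x : ℝ => α * x ^ α * t ^ (α - 1) / (exp ((x * t) ^ α) - 1)) ((lam ∘ σ) i) :=
    (Equiv.sum_comp σ fun i => α * lam i ^ α * t ^ (α - 1) / (exp ((lam i * t) ^ α) - 1)).symm
  have hR : ∑ i, α * θ i ^ α * t ^ (α - 1) / (exp ((θ i * t) ^ α) - 1) =
      ∑ i, (fun x : ℝ => α * x ^ α * t ^ (α - 1) / (exp ((x * t) ^ α) - 1)) ((θ ∘ τ) i) :=
    (Equiv.sum_comp τ fun i => α * θ i ^ α * t ^ (α - 1) / (exp ((θ i * t) ^ α) - 1)).symm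
  rw [hL, hR]
  exact hkar
end

section
/- Fix a real α > 0 and positive reals λ, λ₁, λ₁* such that λ₁* = min(λ, λ₁, λ₁*) and (λ₁, λ) is weakly majorized by (λ₁*, λ) (so that either λ₁* ≤ λ ≤ λ₁ or λ₁* ≤ λ₁ ≤ λ). Then the ratio of reverse hazard rates r_{2:2}*(t) / r_{2:2}(t) = [u(λ₁* t) + u(λ t)] / [u(λ₁ t) + u(λ t)], where u(s) = s^α / (e^{s^α} − 1), is increasing in t on (0, ∞). -/
open Real Set

noncomputable def gW (x : ℝ) : ℝ := x / (Real.exp x - 1)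

noncomputable def phiW (x : ℝ) : ℝ := x * Real.exp x / (Real.exp x - 1) - 1

lemma expm1_pos {x : ℝ} (hx : 0 < x) : 0 < Real.exp x - 1 := by
  have := Real.add_one_lt_exp (ne_of_gt hx); linarith

lemma gW_pos {x : ℝ} (hx : 0 < x) : 0 < gW x := div_pos hx (expm1_pos hx)

lemma gW_anti {x y : ℝ} (hx : 0 < x) (hxy : x ≤ y) : gW y ≤ gW x := by
  have hy : 0 < y := lt_of_lt_of_le hx hxy
  have hsec := convexOn_exp.secant_mono (a := 0) (x := x) (y := y)
      (mem_univ _) (mem_univ _) (mem_univ _) (ne_of_gt hx) (ne_of_gt hy) hxy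
  simp only [Real.exp_zero, sub_zero] at hsec
  rw [gW, gW, div_le_div_iff₀ (expm1_pos hy) (expm1_pos hx)]
  rw [div_le_div_iff₀ hx hy] at hsec
  linarith
lemma phiW_mono {x y : ℝ} (hx : 0 < x) (hxy : x ≤ y) : phiW x ≤ phiW y := by
  have hy : 0 < y := lt_of_lt_of_le hx hxy
  have hsec := convexOn_exp.secant_mono (a := 0) (x := -y) (y := -x)
      (mem_univ _) (mem_univ _) (mem_univ _) (by linarith) (by linarith) (by linarith)
  simp only [Real.exp_zero, sub_zero] at hsec
  rw [div_neg, div_neg, neg_le_neg_iff] at hsec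
  rw [div_le_div_iff₀ hx hy] at hsec
  have h1 : x * (1 - Real.exp (-y)) ≤ y * (1 - Real.exp (-x)) := by linarith
  have hex := Real.exp_pos x
  have hey := Real.exp_pos y
  have hexy : Real.exp (-x) * Real.exp x = 1 := by
    rw [← Real.exp_add]; simp
  have heyy : Real.exp (-y) * Real.exp y = 1 := by
    rw [← Real.exp_add]; simp
  have h2 : x * Real.exp x * (Real.exp y - 1) ≤ y * Real.exp y * (Real.exp x - 1) := by
    rw [Real.exp_neg, Real.exp_neg] at h1
    rw [mul_sub, mul_sub, sub_le_sub_iff, ← sub_le_sub_iff_right (x * 1 + y * 1)] at h1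
    field_simp at h1
    nlinarith [h1]
  rw [phiW, phiW, sub_le_sub_iff_right,
    div_le_div_iff₀ (expm1_pos hx) (expm1_pos hy)]
  linarith

lemma phiW_nonneg {x : ℝ} (hx : 0 < x) : 0 ≤ phiW x := by
  have h := Real.add_one_lt_exp (x := -x) (by linarith)
  have hex := Real.exp_pos x
  have hexy : Real.exp (-x) * Real.exp x = 1 := by rw [← Real.exp_add]; simp
  rw [phiW, sub_nonneg, le_div_iff₀ (expm1_pos hx)]
  nlinarith

lemma hasDerivAt_gW {x : ℝ} (hx : 0 < x) :
    HasDerivAt gW (-(phiW x * gW x) / x) x := by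
  have hne : Real.exp x - 1 ≠ 0 := ne_of_gt (expm1_pos hx)
  have h1 : HasDerivAt (fun y : ℝ => y) 1 x := hasDerivAt_id x
  have h2 : HasDerivAt (fun y : ℝ => Real.exp y - 1) (Real.exp x) x :=
    (Real.hasDerivAt_exp x).sub_const 1
  have h := h1.div h2 hne
  refine h.congr_deriv ?_
  rw [phiW, gW]
  field_simp
  ring

lemma hasDerivAt_gW_scaled {c x : ℝ} (hc : 0 < c) (hx : 0 < x) :
    HasDerivAt (fun y => gW (c * y)) (-(phiW (c * x) * gW (c * x)) / x) x := by
  have hcx : 0 < c * x := mul_pos hc hx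
  have h := (hasDerivAt_gW hcx).comp x ((hasDerivAt_id x).const_mul c)
  simp only [mul_one] at h
  refine h.congr_deriv ?_
  field_simp

lemma key_alg (p q r fa fb fc : ℝ) (hq : 0 < q) (hr : 0 < r) (hpq : q ≤ p)
    (hab : fa ≤ fb) (hac : fa ≤ fc) :
    0 ≤ -((fa * p + fc * r) / 1) * (q + r) + (p + r) * (fb * q + fc * r) := by
  have h1 : 0 ≤ p * q * (fb - fa) :=
    mul_nonneg (mul_nonneg (hq.trans_le hpq).le hq.le) (sub_nonneg.mpr hab)
  have h2 : 0 ≤ r * ((p - q) * (fc - fa)) :=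
    mul_nonneg hr.le (mul_nonneg (sub_nonneg.mpr hpq) (sub_nonneg.mpr hac))
  have h3 : 0 ≤ r * (q * (fb - fa)) :=
    mul_nonneg hr.le (mul_nonneg hq.le (sub_nonneg.mpr hab))
  nlinarith [h1, h2, h3]

lemma G_mono {A B C : ℝ} (hA : 0 < A) (hB : 0 < B) (hC : 0 < C)
    (hAB : A ≤ B) (hAC : A ≤ C) :
    MonotoneOn (fun x => (gW (A * x) + gW (C * x)) / (gW (B * x) + gW (C * x)))
      (Ioi (0 : ℝ)) := by
  have hderiv : ∀ x ∈ Ioi (0 : ℝ),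
      HasDerivAt (fun x => (gW (A * x) + gW (C * x)) / (gW (B * x) + gW (C * x)))
        (((-(phiW (A * x) * gW (A * x)) / x + -(phiW (C * x) * gW (C * x)) / x) *
            (gW (B * x) + gW (C * x)) -
          (gW (A * x) + gW (C * x)) *
            (-(phiW (B * x) * gW (B * x)) / x + -(phiW (C * x) * gW (C * x)) / x)) /
          (gW (B * x) + gW (C * x)) ^ 2) x := by
    intro x hx
    have hx0 : (0 : ℝ) < x := hx
    have hNe : gW (B * x) + gW (C * x) ≠ 0 :=
      ne_of_gt (add_pos (gW_pos (mul_pos hB hx0)) (gW_pos (mul_pos hC hx0)))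
    exact ((hasDerivAt_gW_scaled hA hx0).add (hasDerivAt_gW_scaled hC hx0)).div
      ((hasDerivAt_gW_scaled hB hx0).add (hasDerivAt_gW_scaled hC hx0)) hNe
  apply monotoneOn_of_deriv_nonneg (convex_Ioi 0)
  · exact fun x hx => ((hderiv x hx).continuousAt.continuousWithinAt)
  · rw [interior_Ioi]
    exact fun x hx => ((hderiv x hx).differentiableAt).differentiableWithinAt
  · rw [interior_Ioi]
    intro x hx
    rw [(hderiv x hx).deriv]
    have hx0 : (0 : ℝ) < x := hx
    set pa := gW (A * x) with hpa
    set pb := gW (B * x) with hpb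
    set pc := gW (C * x) with hpc
    set fa := phiW (A * x) with hfa
    set fb := phiW (B * x) with hfb
    set fc := phiW (C * x) with hfc
    have hpa0 : 0 < pa := gW_pos (mul_pos hA hx0)
    have hpb0 : 0 < pb := gW_pos (mul_pos hB hx0)
    have hpc0 : 0 < pc := gW_pos (mul_pos hC hx0)
    have hpab : pb ≤ pa := gW_anti (mul_pos hA hx0) (by nlinarith)
    have hfab : fa ≤ fb := phiW_mono (mul_pos hA hx0) (by nlinarith)
    have hfac : fa ≤ fc := phiW_mono (mul_pos hA hx0) (by nlinarith)
    apply div_nonneg _ (sq_nonneg _)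
    have hkey : 0 ≤ -((fa * pa + fc * pc) / 1) * (pb + pc) + (pa + pc) * (fb * pb + fc * pc) :=
      key_alg pa pb pc fa fb fc hpb0 hpc0 hpab hfab hfac
    have hexpand :
        (-(fa * pa) / x + -(fc * pc) / x) * (pb + pc) -
          (pa + pc) * (-(fb * pb) / x + -(fc * pc) / x) =
        (-((fa * pa + fc * pc) / 1) * (pb + pc) + (pa + pc) * (fb * pb + fc * pc)) / x := by
      field_simp
      ring
    rw [hexpand]
    positivity

/-- For any `α > 0`, if `λ₁* = min(λ, λ₁, λ₁*)` and `(λ₁, λ) ≼^w (λ₁*, λ)`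
(i.e. `min(λ₁, λ) ≥ min(λ₁*, λ)` and `λ₁ + λ ≥ λ₁* + λ`), then the ratio of reverse
hazard rates `r_{2:2}*(t) / r_{2:2}(t) = [u(λ₁* t) + u(λ t)] / [u(λ₁ t) + u(λ t)]`,
with `u(s) = s^α / (e^{s^α} − 1)`, is increasing in `t` on `(0, ∞)`. -/
theorem parallel_weibull_rhr_ratio_monotone_weak_maj
    (α lam lam₁ lam₁s : ℝ) (hα : 0 < α)
    (hlam : 0 < lam) (hlam₁ : 0 < lam₁) (hlam₁s : 0 < lam₁s)
    (hmin : lam₁s = min lam (min lam₁ lam₁s))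
    (hwmaj : min lam₁s lam ≤ min lam₁ lam ∧ lam₁s + lam ≤ lam₁ + lam) :
    MonotoneOn
      (fun t : ℝ =>
        ((lam₁s * t) ^ α / (exp ((lam₁s * t) ^ α) - 1) +
            (lam * t) ^ α / (exp ((lam * t) ^ α) - 1)) /
          ((lam₁ * t) ^ α / (exp ((lam₁ * t) ^ α) - 1) +
            (lam * t) ^ α / (exp ((lam * t) ^ α) - 1)))
      (Ioi (0 : ℝ)) := by
  have hs_le_lam : lam₁s ≤ lam := by
    rw [hmin]; exact min_le_left _ _
  have hs_le_lam₁ : lam₁s ≤ lam₁ := le_trans (by rw [hmin]; exact le_trans (min_le_right _ _) (min_le_left _ _)) (le_refl _)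
  have hA : 0 < lam₁s ^ α := Real.rpow_pos_of_pos hlam₁s α
  have hB : 0 < lam₁ ^ α := Real.rpow_pos_of_pos hlam₁ α
  have hC : 0 < lam ^ α := Real.rpow_pos_of_pos hlam α
  have hAB : lam₁s ^ α ≤ lam₁ ^ α := Real.rpow_le_rpow hlam₁s.le hs_le_lam₁ hα.le
  have hAC : lam₁s ^ α ≤ lam ^ α := Real.rpow_le_rpow hlam₁s.le hs_le_lam hα.le
  have hG := G_mono hA hB hC hAB hAC
  intro t₁ ht₁ t₂ ht₂ h12
  have ht₁0 : (0 : ℝ) < t₁ := ht₁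
  have ht₂0 : (0 : ℝ) < t₂ := ht₂
  have hx₁ : t₁ ^ α ∈ Ioi (0 : ℝ) := Real.rpow_pos_of_pos ht₁0 α
  have hx₂ : t₂ ^ α ∈ Ioi (0 : ℝ) := Real.rpow_pos_of_pos ht₂0 α
  have hle : t₁ ^ α ≤ t₂ ^ α := Real.rpow_le_rpow ht₁0.le h12 hα.le
  have key := hG hx₁ hx₂ hle
  simp only [gW] at key
  simp only []
  rw [Real.mul_rpow hlam₁s.le ht₁0.le, Real.mul_rpow hlam.le ht₁0.le,
    Real.mul_rpow hlam₁.le ht₁0.le, Real.mul_rpow hlam₁s.le ht₂0.le,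
    Real.mul_rpow hlam.le ht₂0.le, Real.mul_rpow hlam₁.le ht₂0.le]
  exact key
end

section
/- Fix a real α > 0, positive integers p, q with p + q = n, and positive reals λ, λ₁, λ₁* such that λ₁* = min(λ, λ₁, λ₁*) and (λ₁, λ) is weakly majorized by (λ₁*, λ) (so that either λ₁* ≤ λ ≤ λ₁ or λ₁* ≤ λ₁ ≤ λ). Then the lifetime of the multiple-outlier parallel system with p components of scale λ₁ and q components of scale λ is smaller in the likelihood ratio order than the one with p components of scale λ₁* and q components of scale λ; that is, the ratio of densities f_{n:n}*(t) / f_{n:n}(t) is increasing in t on (0, ∞). -/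
open Real Set

/-- `(exp y - 1)/y` is increasing: cross-multiplied form. -/
lemma weib_exp_div_mono {s t : ℝ} (hs : 0 < s) (hst : s ≤ t) :
    t * (exp s - 1) ≤ s * (exp t - 1) := by
  have h1 : (1:ℝ) ≤ t / s := (one_le_div hs).2 hst
  have hb := one_add_mul_self_le_rpow_one_add (s := exp s - 1)
    (by nlinarith [exp_pos s]) h1
  have he : (1 + (exp s - 1)) ^ (t / s) = exp t := by
    rw [show (1 + (exp s - 1)) = exp s by ring, ← exp_mul]
    congr 1
    field_simp
  rw [he] at hb
  have h2 : t / s * (exp s - 1) ≤ exp t - 1 := by linarith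
  calc t * (exp s - 1) = t / s * (exp s - 1) * s := by field_simp
    _ ≤ (exp t - 1) * s := by
        apply mul_le_mul_of_nonneg_right h2 hs.le
    _ = s * (exp t - 1) := by ring

/-- `(1 - exp (-y))/y` is decreasing: cross-multiplied form. -/
lemma weib_one_sub_exp_neg_mono {s t : ℝ} (hs : 0 < s) (hst : s ≤ t) :
    s * (1 - exp (-t)) ≤ t * (1 - exp (-s)) := by
  have h1 : (1:ℝ) ≤ t / s := (one_le_div hs).2 hst
  have hb := one_add_mul_self_le_rpow_one_add (s := exp (-s) - 1)
    (by nlinarith [exp_pos (-s)]) h1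
  have he : (1 + (exp (-s) - 1)) ^ (t / s) = exp (-t) := by
    rw [show (1 + (exp (-s) - 1)) = exp (-s) by ring, ← exp_mul]
    congr 1
    field_simp
  rw [he] at hb
  have h2 : 1 - exp (-t) ≤ t / s * (1 - exp (-s)) := by nlinarith
  calc s * (1 - exp (-t)) ≤ s * (t / s * (1 - exp (-s))) := by
        apply mul_le_mul_of_nonneg_left h2 hs.le
    _ = t * (1 - exp (-s)) := by field_simp

/-- The key polynomial inequality. -/
lemma weib_key_ineq {a b c yA yB yC P Q : ℝ} (hb : 0 ≤ b) (hc : 0 ≤ c) (hab : b ≤ a)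
    (hm1 : yA + a ≤ yB + b) (hm2 : yA + a ≤ yC + c) (hy : yA ≤ yB)
    (hP : 1 ≤ P) (hQ : 1 ≤ Q) :
    0 ≤ P*(a-b)*(P*a+Q*c)*(P*b+Q*c)
      + (P*(b*(yB+b)) + Q*(c*(yC+c)))*(P*a+Q*c)
      - (P*(a*(yA+a)) + Q*(c*(yC+c)))*(P*b+Q*c) := by
  have ha : 0 ≤ a := hb.trans hab
  have hP0 : 0 ≤ P := by linarith
  have hQ0 : 0 ≤ Q := by linarith
  have hΔ : 0 ≤ a - b := by linarith
  have e1 : 0 ≤ P^3*a*b*(a-b) := by positivity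
  have e2 : 0 ≤ P^2*(a*b*((yB+b)-(yA+a))) := by
    have : 0 ≤ (yB+b)-(yA+a) := by linarith
    positivity
  have e3 : 0 ≤ (P-1)*P*Q*c*(a+b)*(a-b) := by
    have : 0 ≤ P - 1 := by linarith
    have : 0 ≤ a + b := by linarith
    positivity
  have e4 : 0 ≤ (Q-1)*P*Q*c^2*(a-b) := by
    have : 0 ≤ Q - 1 := by linarith
    positivity
  have e5 : 0 ≤ P*Q*(a-b)*(c*(yC+c) - c*(yA+a)) := by
    have : 0 ≤ c*(yC+c) - c*(yA+a) := by nlinarith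
    positivity
  have e6 : 0 ≤ P*Q*c*(a*(a-b) + b*(yB-yA) + c*(a-b)) := by
    have : 0 ≤ a*(a-b) + b*(yB-yA) + c*(a-b) := by
      have h1 : 0 ≤ a*(a-b) := by positivity
      have h2 : 0 ≤ b*(yB-yA) := by
        have : 0 ≤ yB - yA := by linarith
        positivity
      have h3 : 0 ≤ c*(a-b) := by positivity
      linarith
    positivity
  nlinarith [e1, e2, e3, e4, e5, e6]

lemma weib_hasDerivAt_F (L x : ℝ) :
    HasDerivAt (fun x => 1 - exp (-(L*x))) (L * exp (-(L*x))) x := by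
  have h0 : HasDerivAt (fun x : ℝ => -(L*x)) (-L) x := by
    simpa using (hasDerivAt_neg x).const_mul L
  have h : HasDerivAt (fun x => exp (-(L*x))) (exp (-(L*x)) * (-L)) x := h0.exp
  have := h.const_sub 1
  exact this.congr_deriv (by ring)

lemma weib_hasDerivAt_E (L x : ℝ) :
    HasDerivAt (fun x => exp (L*x) - 1) (L * exp (L*x)) x := by
  have h0 : HasDerivAt (fun x : ℝ => L*x) L x := by
    simpa using (hasDerivAt_id x).const_mul L
  have := h0.exp.sub_const 1
  exact this.congr_deriv (by ring)

lemma weib_hasDerivAt_V (L x : ℝ) (hx : exp (L*x) - 1 ≠ 0) :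
    HasDerivAt (fun x => (L*x)/(exp (L*x) - 1))
      ((L * (exp (L*x) - 1) - (L*x) * (L * exp (L*x))) / (exp (L*x) - 1)^2) x := by
  have h0 : HasDerivAt (fun x : ℝ => L*x) L x := by
    simpa using (hasDerivAt_id x).const_mul L
  exact h0.div (weib_hasDerivAt_E L x) hx

set_option maxHeartbeats 2000000 in
lemma weib_mono_G {A B C : ℝ} (hA : 0 < A) (hC : 0 < C) (hAB : A ≤ B) (hAC : A ≤ C)
    (p q : ℕ) (hp : 0 < p) (hq : 0 < q) :
    MonotoneOn (fun x : ℝ =>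
      ((1 - exp (-(A*x)))^p * ((p:ℝ) * ((A*x)/(exp (A*x) - 1)) + (q:ℝ) * ((C*x)/(exp (C*x) - 1)))) /
      ((1 - exp (-(B*x)))^p * ((p:ℝ) * ((B*x)/(exp (B*x) - 1)) + (q:ℝ) * ((C*x)/(exp (C*x) - 1)))))
      (Ioi 0) := by
  obtain ⟨p', rfl⟩ : ∃ p', p = p' + 1 := ⟨p - 1, (Nat.succ_pred_eq_of_pos hp).symm⟩
  have hB : 0 < B := lt_of_lt_of_le hA hAB
  have key : ∀ x ∈ Ioi (0:ℝ), ∃ d : ℝ, 0 ≤ d ∧ HasDerivAt (fun x : ℝ =>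
      ((1 - exp (-(A*x)))^(p'+1) * (((p'+1 : ℕ):ℝ) * ((A*x)/(exp (A*x) - 1)) + (q:ℝ) * ((C*x)/(exp (C*x) - 1)))) /
      ((1 - exp (-(B*x)))^(p'+1) * (((p'+1 : ℕ):ℝ) * ((B*x)/(exp (B*x) - 1)) + (q:ℝ) * ((C*x)/(exp (C*x) - 1))))) d x := by
    intro x hx
    simp only [mem_Ioi] at hx
    have hyA : 0 < A*x := mul_pos hA hx
    have hyB : 0 < B*x := mul_pos hB hx
    have hyC : 0 < C*x := mul_pos hC hx
    have hyAB : A*x ≤ B*x := mul_le_mul_of_nonneg_right hAB hx.le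
    have hyAC : A*x ≤ C*x := mul_le_mul_of_nonneg_right hAC hx.le
    have heA : 1 < exp (A*x) := by rw [← exp_zero]; exact exp_lt_exp.2 hyA
    have heB : 1 < exp (B*x) := by rw [← exp_zero]; exact exp_lt_exp.2 hyB
    have heC : 1 < exp (C*x) := by rw [← exp_zero]; exact exp_lt_exp.2 hyC
    have heA' : exp (A*x) - 1 ≠ 0 := ne_of_gt (by linarith)
    have heB' : exp (B*x) - 1 ≠ 0 := ne_of_gt (by linarith)
    have heC' : exp (C*x) - 1 ≠ 0 := ne_of_gt (by linarith)
    have hFA : 0 < 1 - exp (-(A*x)) := by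
      rw [exp_neg]; have := inv_lt_one_of_one_lt₀ heA; linarith
    have hFB : 0 < 1 - exp (-(B*x)) := by
      rw [exp_neg]; have := inv_lt_one_of_one_lt₀ heB; linarith
    have ha0 : 0 < (A*x)/(exp (A*x) - 1) := div_pos hyA (by linarith)
    have hb0 : 0 < (B*x)/(exp (B*x) - 1) := div_pos hyB (by linarith)
    have hc0 : 0 < (C*x)/(exp (C*x) - 1) := div_pos hyC (by linarith)
    have hPpos : (0:ℝ) < ((p'+1 : ℕ):ℝ) := by positivity
    have hQpos : (0:ℝ) < (q:ℝ) := by exact_mod_cast hq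
    have hSA : 0 < ((p'+1 : ℕ):ℝ) * ((A*x)/(exp (A*x) - 1)) + (q:ℝ) * ((C*x)/(exp (C*x) - 1)) :=
      add_pos (mul_pos hPpos ha0) (mul_pos hQpos hc0)
    have hSB : 0 < ((p'+1 : ℕ):ℝ) * ((B*x)/(exp (B*x) - 1)) + (q:ℝ) * ((C*x)/(exp (C*x) - 1)) :=
      add_pos (mul_pos hPpos hb0) (mul_pos hQpos hc0)
    have hDne : (1 - exp (-(B*x)))^(p'+1) * (((p'+1 : ℕ):ℝ) * ((B*x)/(exp (B*x) - 1)) + (q:ℝ) * ((C*x)/(exp (C*x) - 1))) ≠ 0 :=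
      ne_of_gt (mul_pos (pow_pos hFB _) hSB)
    have hSA' : HasDerivAt (fun x => ((p'+1 : ℕ):ℝ) * ((A*x)/(exp (A*x) - 1)) + (q:ℝ) * ((C*x)/(exp (C*x) - 1)))
        (((p'+1 : ℕ):ℝ) * ((A * (exp (A*x) - 1) - (A*x) * (A * exp (A*x))) / (exp (A*x) - 1)^2)
          + (q:ℝ) * ((C * (exp (C*x) - 1) - (C*x) * (C * exp (C*x))) / (exp (C*x) - 1)^2)) x :=
      ((weib_hasDerivAt_V A x heA').const_mul _).add ((weib_hasDerivAt_V C x heC').const_mul _)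
    have hSB' : HasDerivAt (fun x => ((p'+1 : ℕ):ℝ) * ((B*x)/(exp (B*x) - 1)) + (q:ℝ) * ((C*x)/(exp (C*x) - 1)))
        (((p'+1 : ℕ):ℝ) * ((B * (exp (B*x) - 1) - (B*x) * (B * exp (B*x))) / (exp (B*x) - 1)^2)
          + (q:ℝ) * ((C * (exp (C*x) - 1) - (C*x) * (C * exp (C*x))) / (exp (C*x) - 1)^2)) x :=
      ((weib_hasDerivAt_V B x heB').const_mul _).add ((weib_hasDerivAt_V C x heC').const_mul _)
    have hNum := ((weib_hasDerivAt_F A x).pow (p'+1)).mul hSA'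
    have hDen := ((weib_hasDerivAt_F B x).pow (p'+1)).mul hSB'
    refine ⟨_, ?_, hNum.div hDen hDne⟩
    apply div_nonneg ?_ (by positivity)
    simp only [Nat.add_sub_cancel]
    have hFC : 0 < 1 - exp (-(C*x)) := by
      rw [exp_neg]; have := inv_lt_one_of_one_lt₀ heC; linarith
    have hab : (B*x)/(exp (B*x) - 1) ≤ (A*x)/(exp (A*x) - 1) :=
      (div_le_div_iff₀ (by linarith) (by linarith)).2 (weib_exp_div_mono hyA hyAB)
    have hmaA : A*x + (A*x)/(exp (A*x) - 1) = (A*x)/(1 - exp (-(A*x))) := by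
      rw [eq_div_iff (ne_of_gt hFA), exp_neg]
      field_simp
      ring
    have hmaB : B*x + (B*x)/(exp (B*x) - 1) = (B*x)/(1 - exp (-(B*x))) := by
      rw [eq_div_iff (ne_of_gt hFB), exp_neg]
      field_simp
      ring
    have hmaC : C*x + (C*x)/(exp (C*x) - 1) = (C*x)/(1 - exp (-(C*x))) := by
      rw [eq_div_iff (ne_of_gt hFC), exp_neg]
      field_simp
      ring
    have hm1 : A*x + (A*x)/(exp (A*x) - 1) ≤ B*x + (B*x)/(exp (B*x) - 1) := by
      rw [hmaA, hmaB]
      exact (div_le_div_iff₀ hFA hFB).2 (weib_one_sub_exp_neg_mono hyA hyAB)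
    have hm2 : A*x + (A*x)/(exp (A*x) - 1) ≤ C*x + (C*x)/(exp (C*x) - 1) := by
      rw [hmaA, hmaC]
      exact (div_le_div_iff₀ hFA hFC).2 (weib_one_sub_exp_neg_mono hyA hyAC)
    have hP1 : (1:ℝ) ≤ ((p'+1 : ℕ):ℝ) := by exact_mod_cast Nat.succ_le_succ (Nat.zero_le p')
    have hQ1 : (1:ℝ) ≤ (q:ℝ) := by exact_mod_cast hq
    have hT := weib_key_ineq hb0.le hc0.le hab hm1 hm2 hyAB hP1 hQ1
    set P : ℝ := ((p'+1 : ℕ):ℝ) with hPdef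
    set Q : ℝ := (q:ℝ) with hQdef
    set a : ℝ := (A*x)/(exp (A*x) - 1) with hadef
    set b : ℝ := (B*x)/(exp (B*x) - 1) with hbdef
    set c : ℝ := (C*x)/(exp (C*x) - 1) with hcdef
    refine le_of_le_of_eq (b :=
      (1 - exp (-(A*x)))^p' * (1 - exp (-(B*x)))^p' *
        (((1 - exp (-(A*x))) * (1 - exp (-(B*x))) / x) *
          (P*(a-b)*(P*a+Q*c)*(P*b+Q*c)
            + (P*(b*(B*x+b)) + Q*(c*(C*x+c)))*(P*a+Q*c)
            - (P*(a*(A*x+a)) + Q*(c*(C*x+c)))*(P*b+Q*c)))) ?_ ?_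
    · have hw : 0 ≤ (1 - exp (-(A*x))) * (1 - exp (-(B*x))) / x := by positivity
      positivity
    · have hVA : (A * (exp (A*x) - 1) - A * x * (A * exp (A*x))) / (exp (A*x) - 1)^2
          = (a - a*(A*x + a))/x := by
        rw [hadef]; field_simp; ring
      have hVB : (B * (exp (B*x) - 1) - B * x * (B * exp (B*x))) / (exp (B*x) - 1)^2
          = (b - b*(B*x + b))/x := by
        rw [hbdef]; field_simp; ring
      have hVC : (C * (exp (C*x) - 1) - C * x * (C * exp (C*x))) / (exp (C*x) - 1)^2
          = (c - c*(C*x + c))/x := by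
        rw [hcdef]; field_simp; ring
      have hAe : A * exp (-(A*x)) = (1 - exp (-(A*x))) * a / x := by
        rw [hadef, exp_neg]; field_simp
      have hBe : B * exp (-(B*x)) = (1 - exp (-(B*x))) * b / x := by
        rw [hbdef, exp_neg]; field_simp
      rw [hVA, hVB, hVC, hAe, hBe]
      simp only [Pi.pow_apply, Pi.mul_apply]
      rw [← hadef, ← hcdef]
      ring
  apply monotoneOn_of_deriv_nonneg (convex_Ioi 0)
  · intro x hx
    exact ((key x hx).choose_spec.2.differentiableAt).continuousAt.continuousWithinAt
  · intro x hx
    rw [interior_Ioi] at hx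
    exact ((key x hx).choose_spec.2.differentiableAt).differentiableWithinAt
  · intro x hx
    rw [interior_Ioi] at hx
    obtain ⟨d, hd0, hd⟩ := key x hx
    rw [hd.deriv]
    exact hd0

lemma weib_cancel {FA FB FC SA SB w : ℝ} (hFB : FB ≠ 0) (hFC : FC ≠ 0) (hSB : SB ≠ 0)
    (hw : w ≠ 0) (p q : ℕ) :
    (FA^p * FC^q * (w * SA)) / (FB^p * FC^q * (w * SB)) = (FA^p * SA)/(FB^p * SB) := by
  have h1 : FB^p ≠ 0 := pow_ne_zero _ hFB
  have h2 : FC^q ≠ 0 := pow_ne_zero _ hFC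
  field_simp

/-- For any `α > 0` and `p + q = n` with `p, q ≥ 1`, if `λ₁* = min(λ, λ₁, λ₁*)` and
`(λ₁, λ) ≼^w (λ₁*, λ)` (i.e. `min(λ₁, λ) ≥ min(λ₁*, λ)` and `λ₁ + λ ≥ λ₁* + λ`), then
`X_{n:n} ≤_lr Y_{n:n}`: the ratio of densities `f_{n:n}*(t) / f_{n:n}(t)` of the
multiple-outlier parallel Weibull systems, where the density for parameters `(a, b)` is
`(1 − e^{−(a t)^α})^p (1 − e^{−(b t)^α})^q · (α/t) · [p·u(a t) + q·u(b t)]` with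
`u(s) = s^α / (e^{s^α} − 1)`, is increasing in `t` on `(0, ∞)`. -/
theorem multiple_outlier_weibull_lr_order_weak_maj
    (α lam lam₁ lam₁s : ℝ) (hα : 0 < α)
    (hlam : 0 < lam) (hlam₁ : 0 < lam₁) (hlam₁s : 0 < lam₁s)
    (p q n : ℕ) (hp : 0 < p) (hq : 0 < q) (hn : p + q = n)
    (hmin : lam₁s = min lam (min lam₁ lam₁s))
    (hwmaj : min lam₁s lam ≤ min lam₁ lam ∧ lam₁s + lam ≤ lam₁ + lam) :
    MonotoneOn
      (fun t : ℝ =>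
        ((1 - exp (-((lam₁s * t) ^ α))) ^ p * (1 - exp (-((lam * t) ^ α))) ^ q *
            ((α / t) *
              ((p : ℝ) * ((lam₁s * t) ^ α / (exp ((lam₁s * t) ^ α) - 1)) +
                (q : ℝ) * ((lam * t) ^ α / (exp ((lam * t) ^ α) - 1))))) /
          ((1 - exp (-((lam₁ * t) ^ α))) ^ p * (1 - exp (-((lam * t) ^ α))) ^ q *
            ((α / t) *
              ((p : ℝ) * ((lam₁ * t) ^ α / (exp ((lam₁ * t) ^ α) - 1)) +
                (q : ℝ) * ((lam * t) ^ α / (exp ((lam * t) ^ α) - 1))))))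
      (Ioi (0 : ℝ)) := by
  have h1 : lam₁s ≤ lam := by
    conv_lhs => rw [hmin]
    exact min_le_left _ _
  have h2 : lam₁s ≤ lam₁ := by
    conv_lhs => rw [hmin]
    exact le_trans (min_le_right _ _) (min_le_left _ _)
  have hA : 0 < lam₁s ^ α := rpow_pos_of_pos hlam₁s α
  have hBpos : 0 < lam₁ ^ α := rpow_pos_of_pos hlam₁ α
  have hCpos : 0 < lam ^ α := rpow_pos_of_pos hlam α
  have hAB : lam₁s ^ α ≤ lam₁ ^ α := rpow_le_rpow hlam₁s.le h2 hα.le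
  have hAC : lam₁s ^ α ≤ lam ^ α := rpow_le_rpow hlam₁s.le h1 hα.le
  have hmono := weib_mono_G hA hCpos hAB hAC p q hp hq
  have heq : ∀ t ∈ Ioi (0:ℝ),
      ((1 - exp (-((lam₁s * t) ^ α))) ^ p * (1 - exp (-((lam * t) ^ α))) ^ q *
            ((α / t) *
              ((p : ℝ) * ((lam₁s * t) ^ α / (exp ((lam₁s * t) ^ α) - 1)) +
                (q : ℝ) * ((lam * t) ^ α / (exp ((lam * t) ^ α) - 1))))) /
          ((1 - exp (-((lam₁ * t) ^ α))) ^ p * (1 - exp (-((lam * t) ^ α))) ^ q *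
            ((α / t) *
              ((p : ℝ) * ((lam₁ * t) ^ α / (exp ((lam₁ * t) ^ α) - 1)) +
                (q : ℝ) * ((lam * t) ^ α / (exp ((lam * t) ^ α) - 1)))))
        = ((1 - exp (-(lam₁s ^ α * t ^ α)))^p *
              ((p:ℝ) * ((lam₁s ^ α * t ^ α)/(exp (lam₁s ^ α * t ^ α) - 1)) +
                (q:ℝ) * ((lam ^ α * t ^ α)/(exp (lam ^ α * t ^ α) - 1)))) /
          ((1 - exp (-(lam₁ ^ α * t ^ α)))^p *
              ((p:ℝ) * ((lam₁ ^ α * t ^ α)/(exp (lam₁ ^ α * t ^ α) - 1)) +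
                (q:ℝ) * ((lam ^ α * t ^ α)/(exp (lam ^ α * t ^ α) - 1)))) := by
    intro t ht
    simp only [mem_Ioi] at ht
    rw [mul_rpow hlam₁s.le ht.le, mul_rpow hlam.le ht.le, mul_rpow hlam₁.le ht.le]
    have hx : 0 < t ^ α := rpow_pos_of_pos ht α
    have hyB : 0 < lam₁ ^ α * t ^ α := mul_pos hBpos hx
    have hyC : 0 < lam ^ α * t ^ α := mul_pos hCpos hx
    have heB : 1 < exp (lam₁ ^ α * t ^ α) := by rw [← exp_zero]; exact exp_lt_exp.2 hyB
    have heC : 1 < exp (lam ^ α * t ^ α) := by rw [← exp_zero]; exact exp_lt_exp.2 hyC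
    have hFB : (1 - exp (-(lam₁ ^ α * t ^ α))) ≠ 0 := by
      rw [exp_neg]; have := inv_lt_one_of_one_lt₀ heB; intro h; linarith [h]
    have hFC : (1 - exp (-(lam ^ α * t ^ α))) ≠ 0 := by
      rw [exp_neg]; have := inv_lt_one_of_one_lt₀ heC; intro h; linarith [h]
    have hSB : ((p:ℝ) * ((lam₁ ^ α * t ^ α)/(exp (lam₁ ^ α * t ^ α) - 1)) +
        (q:ℝ) * ((lam ^ α * t ^ α)/(exp (lam ^ α * t ^ α) - 1))) ≠ 0 := by
      have hPpos : (0:ℝ) < (p:ℝ) := by exact_mod_cast hp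
      have hQpos : (0:ℝ) < (q:ℝ) := by exact_mod_cast hq
      have hb0 : 0 < (lam₁ ^ α * t ^ α)/(exp (lam₁ ^ α * t ^ α) - 1) := div_pos hyB (by linarith)
      have hc0 : 0 < (lam ^ α * t ^ α)/(exp (lam ^ α * t ^ α) - 1) := div_pos hyC (by linarith)
      exact ne_of_gt (add_pos (mul_pos hPpos hb0) (mul_pos hQpos hc0))
    have hw : α / t ≠ 0 := div_ne_zero hα.ne' ht.ne'
    exact weib_cancel hFB hFC hSB hw p q
  intro s hs t ht hst
  simp only
  rw [heq s hs, heq t ht]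
  exact hmono (mem_Ioi.2 (rpow_pos_of_pos hs α)) (mem_Ioi.2 (rpow_pos_of_pos ht α))
    (rpow_le_rpow (le_of_lt hs) hst hα.le)
end
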